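/- Let H be a Hopf algebra over a commutative ring k that is finitely generated projective as a k-module. Then the dual H* is a right Hopf module over H, with H*-comodule structure χ : H* → H* ⊗ H determined by gh = Σ h₍₀₎ g(h₍₁₎) for all g, h ∈ H*, and right H-module structure (h*·h)(x) = h*(x S(h)). -/

import Mathlib

open scoped TensorProduct

/-- The convolution product on the dual of a coalgebra: `(g * f)(a) = Σ g(a₍₁₎) f(a₍₂₎)`. -/
noncomputable def conv (k H : Type*) [CommRing k] [AddCommGroup H] [Module k H]
    [Coalgebra k H] (g f : Module.Dual k H) : Module.Dual k H :=
  LinearMap.mul' k k ∘ₗ TensorProduct.map g f ∘ₗ Coalgebra.comul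

/-- The right `H`-action on `H*` given by `(f·h)(x) = f(x S(h))`, bundled as a linear map
`H →ₗ (H* →ₗ H*)`. -/
noncomputable def dualAct (k H : Type*) [CommRing k] [Ring H] [HopfAlgebra k H] :
    H →ₗ[k] Module.Dual k H →ₗ[k] Module.Dual k H :=
  (LinearMap.llcomp k H H k).flip ∘ₗ (LinearMap.mul k H).flip ∘ₗ
    HopfAlgebra.antipode (R := k)

open Coalgebra LinearMap

section Conv
variable {k H : Type*} [CommRing k] [Ring H] [HopfAlgebra k H]

/-- Convolution product on `Hom(H, A)`. -/
noncomputable def cmulAux {A : Type*} [Ring A] [Algebra k A] (φ ψ : H →ₗ[k] A) : H →ₗ[k] A :=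
  LinearMap.mul' k A ∘ₗ TensorProduct.map φ ψ ∘ₗ Coalgebra.comul

lemma cmulAux_repr {A : Type*} [Ring A] [Algebra k A] (φ ψ : H →ₗ[k] A) {a : H} {ι : Type*}
    (r : Coalgebra.Repr k a ι) :
    cmulAux φ ψ a = ∑ i ∈ r.index, φ (r.left i) * ψ (r.right i) := by
  simp only [cmulAux, LinearMap.comp_apply, ← r.eq, map_sum, TensorProduct.map_tmul,
    LinearMap.mul'_apply]

lemma cmulAux_assoc {A : Type*} [Ring A] [Algebra k A] (φ ψ χ : H →ₗ[k] A) :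
    cmulAux (cmulAux φ ψ) χ = cmulAux φ (cmulAux ψ χ) := by
  ext a
  set r := Coalgebra.Repr.arbitrary k a with hr
  set a₁ : (i : r.ι) → Coalgebra.Repr k (r.left i) (H × H) := fun i => Coalgebra.Repr.arbitrary k _
  set a₂ : (i : r.ι) → Coalgebra.Repr k (r.right i) (H × H) := fun i => Coalgebra.Repr.arbitrary k _
  have key := Coalgebra.sum_map_tmul_tmul_eq (R := k) φ ψ χ a (repr := r) (a₁ := a₁) (a₂ := a₂)
  have key2 := congrArg (LinearMap.mul' k A ∘ₗ LinearMap.lTensor A (LinearMap.mul' k A)) key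
  simp only [map_sum, LinearMap.comp_apply, LinearMap.lTensor_tmul, LinearMap.mul'_apply] at key2
  calc cmulAux (cmulAux φ ψ) χ a
      = ∑ i ∈ r.index, cmulAux φ ψ (r.left i) * χ (r.right i) := cmulAux_repr _ _ r
    _ = ∑ i ∈ r.index, ∑ j ∈ (a₁ i).index,
          φ ((a₁ i).left j) * ψ ((a₁ i).right j) * χ (r.right i) := by
        refine Finset.sum_congr rfl fun i _ => ?_
        rw [cmulAux_repr _ _ (a₁ i), Finset.sum_mul]
    _ = ∑ i ∈ r.index, ∑ j ∈ (a₁ i).index,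
          φ ((a₁ i).left j) * (ψ ((a₁ i).right j) * χ (r.right i)) := by
        simp only [mul_assoc]
    _ = ∑ i ∈ r.index, ∑ j ∈ (a₂ i).index,
          φ (r.left i) * (ψ ((a₂ i).left j) * χ ((a₂ i).right j)) := key2.symm
    _ = ∑ i ∈ r.index, φ (r.left i) * cmulAux ψ χ (r.right i) := by
        refine Finset.sum_congr rfl fun i _ => ?_
        rw [cmulAux_repr _ _ (a₂ i), Finset.mul_sum]
    _ = cmulAux φ (cmulAux ψ χ) a := (cmulAux_repr _ _ r).symm

lemma unit_cmulAux {A : Type*} [Ring A] [Algebra k A] (ψ : H →ₗ[k] A) :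
    cmulAux ((Algebra.linearMap k A) ∘ₗ Coalgebra.counit) ψ = ψ := by
  ext a
  set r := Coalgebra.Repr.arbitrary k a with hr
  have h1 : ∑ i ∈ r.index, Coalgebra.counit (R := k) (r.left i) • r.right i = a := by
    have h := Coalgebra.sum_counit_tmul_eq r
    have h2 := congrArg (TensorProduct.lid k H) h
    simpa only [map_sum, TensorProduct.lid_tmul, one_smul] using h2
  calc cmulAux (Algebra.linearMap k A ∘ₗ Coalgebra.counit) ψ a
      = ∑ i ∈ r.index,
          algebraMap k A (Coalgebra.counit (r.left i)) * ψ (r.right i) := cmulAux_repr _ _ r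
    _ = ∑ i ∈ r.index, Coalgebra.counit (R := k) (r.left i) • ψ (r.right i) := by
        simp only [Algebra.smul_def]
    _ = ψ a := by
        conv_rhs => rw [← h1]
        rw [map_sum]
        simp only [map_smul]

open HopfAlgebra in
lemma antipodeComul_cmul_comul :
    cmulAux (Coalgebra.comul ∘ₗ antipode (R := k) (A := H)) Coalgebra.comul
      = Algebra.linearMap k (H ⊗[k] H) ∘ₗ Coalgebra.counit := by
  ext a
  set r := Coalgebra.Repr.arbitrary k a with hr
  calc cmulAux (Coalgebra.comul ∘ₗ antipode (R := k) (A := H)) Coalgebra.comul a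
      = ∑ i ∈ r.index,
          Coalgebra.comul (R := k) (antipode (R := k) (r.left i)) * Coalgebra.comul (r.right i) :=
        cmulAux_repr _ _ r
    _ = ∑ i ∈ r.index,
          Coalgebra.comul (R := k) (antipode (R := k) (r.left i) * r.right i) := by
        simp only [Bialgebra.comul_mul]
    _ = Coalgebra.comul (R := k) (∑ i ∈ r.index, antipode (R := k) (r.left i) * r.right i) := by
        rw [map_sum]
    _ = Coalgebra.comul (R := k) (algebraMap k H (Coalgebra.counit a)) := by
        rw [HopfAlgebra.sum_antipode_mul_eq_algebraMap_counit r]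
    _ = algebraMap k (H ⊗[k] H) (Coalgebra.counit a) := by
        rw [Bialgebra.comul_algebraMap]
    _ = (Algebra.linearMap k (H ⊗[k] H) ∘ₗ Coalgebra.counit) a := rfl

open HopfAlgebra in
lemma comul_cmul_psi :
    cmulAux Coalgebra.comul (TensorProduct.mk k H H 1 ∘ₗ antipode (R := k) (A := H))
      = (TensorProduct.mk k H H).flip 1 := by
  ext a
  set r := Coalgebra.Repr.arbitrary k a with hr
  set a₁ : (i : r.ι) → Coalgebra.Repr k (r.left i) (H × H) := fun i => Coalgebra.Repr.arbitrary k _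
  set a₂ : (i : r.ι) → Coalgebra.Repr k (r.right i) (H × H) := fun i => Coalgebra.Repr.arbitrary k _
  have key := congrArg
    (LinearMap.lTensor H (LinearMap.mul' k H ∘ₗ LinearMap.lTensor H (antipode (R := k))))
    (Coalgebra.sum_tmul_tmul_eq r a₁ a₂)
  simp only [map_sum, LinearMap.lTensor_tmul, LinearMap.comp_apply, LinearMap.mul'_apply] at key
  have key2 : ∑ i ∈ r.index, (r.left i) ⊗ₜ[k] algebraMap k H (Coalgebra.counit (r.right i))
      = a ⊗ₜ[k] (1 : H) := by
    have h := congrArg (LinearMap.lTensor H (Algebra.linearMap k H))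
      (Coalgebra.sum_tmul_counit_eq r)
    simpa only [map_sum, LinearMap.lTensor_tmul, Algebra.linearMap_apply, map_one] using h
  calc cmulAux Coalgebra.comul (TensorProduct.mk k H H 1 ∘ₗ antipode (R := k) (A := H)) a
      = ∑ i ∈ r.index,
          Coalgebra.comul (R := k) (r.left i) * ((1 : H) ⊗ₜ[k] antipode (R := k) (r.right i)) :=
        cmulAux_repr _ _ r
    _ = ∑ i ∈ r.index, ∑ j ∈ (a₁ i).index,
          (a₁ i).left j ⊗ₜ[k] ((a₁ i).right j * antipode (R := k) (r.right i)) := by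
        refine Finset.sum_congr rfl fun i _ => ?_
        rw [← (a₁ i).eq, Finset.sum_mul]
        simp only [Algebra.TensorProduct.tmul_mul_tmul, mul_one]
    _ = ∑ i ∈ r.index, ∑ j ∈ (a₂ i).index,
          (r.left i) ⊗ₜ[k] ((a₂ i).left j * antipode (R := k) ((a₂ i).right j)) := key
    _ = ∑ i ∈ r.index, (r.left i) ⊗ₜ[k] algebraMap k H (Coalgebra.counit (r.right i)) := by
        refine Finset.sum_congr rfl fun i _ => ?_
        rw [← TensorProduct.tmul_sum, HopfAlgebra.sum_mul_antipode_eq_algebraMap_counit (a₂ i)]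
    _ = a ⊗ₜ[k] (1 : H) := key2
    _ = ((TensorProduct.mk k H H).flip 1) a := rfl

open HopfAlgebra in
lemma antipodeComul_cmul_jm :
    cmulAux (Coalgebra.comul ∘ₗ antipode (R := k) (A := H)) ((TensorProduct.mk k H H).flip 1)
      = TensorProduct.mk k H H 1 ∘ₗ antipode (R := k) (A := H) := by
  calc cmulAux (Coalgebra.comul ∘ₗ antipode (R := k) (A := H)) ((TensorProduct.mk k H H).flip 1)
      = cmulAux (Coalgebra.comul ∘ₗ antipode (R := k) (A := H))
          (cmulAux Coalgebra.comul (TensorProduct.mk k H H 1 ∘ₗ antipode (R := k) (A := H))) := by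
        rw [comul_cmul_psi]
    _ = cmulAux
          (cmulAux (Coalgebra.comul ∘ₗ antipode (R := k) (A := H)) Coalgebra.comul)
          (TensorProduct.mk k H H 1 ∘ₗ antipode (R := k) (A := H)) :=
        (cmulAux_assoc _ _ _).symm
    _ = cmulAux (Algebra.linearMap k (H ⊗[k] H) ∘ₗ Coalgebra.counit)
          (TensorProduct.mk k H H 1 ∘ₗ antipode (R := k) (A := H)) := by
        rw [antipodeComul_cmul_comul]
    _ = TensorProduct.mk k H H 1 ∘ₗ antipode (R := k) (A := H) := unit_cmulAux _

lemma conv_eq_cmulAux (g f : Module.Dual k H) : conv k H g f = cmulAux g f := rfl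

lemma conv_counit (f : Module.Dual k H) : conv k H Coalgebra.counit f = f := by
  have h := unit_cmulAux (k := k) (H := H) (A := k) f
  have h2 : (Algebra.linearMap k k ∘ₗ Coalgebra.counit (R := k) (A := H))
      = Coalgebra.counit := by
    ext x; simp
  rw [h2] at h
  rw [conv_eq_cmulAux, h]

/-- Convolution as a bilinear map. -/
noncomputable def convLM : Module.Dual k H →ₗ[k] Module.Dual k H →ₗ[k] Module.Dual k H :=
  LinearMap.mk₂ k (conv k H)
    (fun g g' f => by
      simp only [conv, TensorProduct.map_add_left, LinearMap.add_comp, LinearMap.comp_add])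
    (fun c g f => by
      simp only [conv, TensorProduct.map_smul_left, LinearMap.smul_comp, LinearMap.comp_smul])
    (fun g f f' => by
      simp only [conv, TensorProduct.map_add_right, LinearMap.add_comp, LinearMap.comp_add])
    (fun c g f => by
      simp only [conv, TensorProduct.map_smul_right, LinearMap.smul_comp, LinearMap.comp_smul])

@[simp] lemma convLM_apply (g f : Module.Dual k H) : convLM g f = conv k H g f := rfl

section DualBasis

variable {n : ℕ} (e : Fin n → H) (ε : Fin n → Module.Dual k H)
variable (hd : ∀ x : H, ∑ i, ε i x • e i = x)

include hd in
/-- Workhorse: the dual-basis expansion of convolution. -/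
lemma conv_dual (G f : Module.Dual k H) :
    ∑ i, G (e i) • conv k H (ε i) f = conv k H G f := by
  have hG : (∑ i, G (e i) • ε i) = G := by
    ext x
    simp only [LinearMap.sum_apply, LinearMap.smul_apply, smul_eq_mul]
    calc ∑ i, G (e i) * ε i x = G (∑ i, ε i x • e i) := by
          rw [map_sum]; refine Finset.sum_congr rfl fun i _ => ?_
          rw [map_smul, smul_eq_mul, mul_comm]
      _ = G x := by rw [hd]
  calc ∑ i, G (e i) • conv k H (ε i) f
      = ∑ i, G (e i) • (convLM.flip f) (ε i) := rfl
    _ = (convLM.flip f) (∑ i, G (e i) • ε i) := by rw [map_sum]; simp only [map_smul]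
    _ = conv k H G f := by rw [hG]; rfl

/-- The comodule structure map on the dual. -/
noncomputable def rho : Module.Dual k H →ₗ[k] Module.Dual k H ⊗[k] H :=
  ∑ i, (TensorProduct.mk k (Module.Dual k H) H).flip (e i) ∘ₗ convLM (ε i)

lemma rho_apply (f : Module.Dual k H) :
    rho e ε f = ∑ i, conv k H (ε i) f ⊗ₜ[k] e i := by
  simp only [rho, LinearMap.sum_apply, LinearMap.comp_apply, TensorProduct.mk_apply,
    LinearMap.flip_apply, convLM_apply]

end DualBasis

/-- Pairing a dual vector against the right tensor factor. -/
noncomputable def Emap {M : Type*} [AddCommGroup M] [Module k M] (g : Module.Dual k H) :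
    M ⊗[k] H →ₗ[k] M :=
  (TensorProduct.rid k M).toLinearMap ∘ₗ LinearMap.lTensor M g

@[simp] lemma Emap_tmul {M : Type*} [AddCommGroup M] [Module k M] (g : Module.Dual k H)
    (m : M) (h : H) : Emap g (m ⊗ₜ[k] h) = g h • m := by
  simp [Emap]

section DualBasis2

variable {n : ℕ} (e : Fin n → H) (ε : Fin n → Module.Dual k H)
variable (hd : ∀ x : H, ∑ i, ε i x • e i = x)

include hd in
lemma Emap_expand {M : Type*} [AddCommGroup M] [Module k M] (t : M ⊗[k] H) :
    ∑ i, (Emap (ε i) t) ⊗ₜ[k] e i = t := by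
  induction t using TensorProduct.induction_on with
  | zero => simp
  | tmul m h =>
    calc ∑ i, (Emap (ε i) (m ⊗ₜ[k] h)) ⊗ₜ[k] e i
        = ∑ i, m ⊗ₜ[k] (ε i h • e i) := by
          refine Finset.sum_congr rfl fun i _ => ?_
          rw [Emap_tmul, TensorProduct.smul_tmul]
      _ = m ⊗ₜ[k] h := by rw [← TensorProduct.tmul_sum, hd]
  | add x y hx hy =>
    simp only [map_add, TensorProduct.add_tmul, Finset.sum_add_distrib, hx, hy]

include hd in
lemma Emap_ext {M : Type*} [AddCommGroup M] [Module k M] {t t' : M ⊗[k] H}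
    (h : ∀ g : Module.Dual k H, Emap g t = Emap g t') : t = t' := by
  rw [← Emap_expand e ε hd t, ← Emap_expand e ε hd t']
  exact Finset.sum_congr rfl fun i _ => by rw [h]

include hd in
lemma Emap_rho (g f : Module.Dual k H) :
    Emap g (rho e ε f) = conv k H g f := by
  rw [rho_apply, map_sum]
  simp only [Emap_tmul]
  exact conv_dual e ε hd g f

end DualBasis2
end Conv

section Main
variable {k H : Type*} [CommRing k] [Ring H] [HopfAlgebra k H]

@[simp] lemma dualAct_apply (h : H) (f : Module.Dual k H) (x : H) :
    dualAct k H h f x = f (x * HopfAlgebra.antipode (R := k) h) := rfl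

lemma P2A (g g' : Module.Dual k H) (c : Module.Dual k H) (u : H ⊗[k] H) :
    Emap g' (Emap g ((TensorProduct.assoc k (Module.Dual k H) H H).symm (c ⊗ₜ[k] u)))
      = (LinearMap.mul' k k) (TensorProduct.map g' g u) • c := by
  induction u using TensorProduct.induction_on with
  | zero => simp
  | tmul x y =>
    simp only [TensorProduct.assoc_symm_tmul, Emap_tmul, map_smul, TensorProduct.map_tmul,
      LinearMap.mul'_apply, smul_smul, smul_eq_mul]
    rw [mul_comm]
  | add u v hu hv =>
    simp only [TensorProduct.tmul_add, map_add, hu, hv, add_smul]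

lemma P4A (g f : Module.Dual k H) (b : H) (u : H ⊗[k] H) :
    LinearMap.mul' k k (TensorProduct.map (g ∘ₗ (LinearMap.mul k H).flip b) f u)
      = LinearMap.mul' k k (TensorProduct.map g f (u * (b ⊗ₜ[k] (1 : H)))) := by
  induction u using TensorProduct.induction_on with
  | zero => simp
  | tmul x z =>
    simp only [TensorProduct.map_tmul, LinearMap.mul'_apply, LinearMap.comp_apply,
      Algebra.TensorProduct.tmul_mul_tmul, mul_one, LinearMap.flip_apply, LinearMap.mul_apply']
  | add u v hu hv => simp only [map_add, add_mul, hu, hv]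

lemma P4C (g f : Module.Dual k H) (h : H) (u : H ⊗[k] H) :
    LinearMap.mul' k k (TensorProduct.map g (dualAct k H h f) u)
      = LinearMap.mul' k k
          (TensorProduct.map g f (u * ((1 : H) ⊗ₜ[k] HopfAlgebra.antipode (R := k) h))) := by
  induction u using TensorProduct.induction_on with
  | zero => simp
  | tmul x z =>
    simp only [TensorProduct.map_tmul, LinearMap.mul'_apply, dualAct_apply,
      Algebra.TensorProduct.tmul_mul_tmul, mul_one]
  | add u v hu hv => simp only [map_add, add_mul, hu, hv]

end Main

set_option maxHeartbeats 1000000 in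
/-- `H*` is a right Hopf module over a finitely generated projective Hopf algebra `H`:
there is a comodule structure `ρ : H* → H* ⊗ H` (counital and coassociative) determined by
`g·h = Σ h₍₀₎ g(h₍₁₎)` for `g, h ∈ H*` (convolution on the left), which is compatible in the
Hopf module sense with the right `H`-module structure `(f·h)(x) = f(x S(h))`. -/
theorem dual_is_right_hopf_module (k H : Type*) [CommRing k] [Ring H] [HopfAlgebra k H]
    [Module.Finite k H] [Module.Projective k H] :
    ∃ ρ : Module.Dual k H →ₗ[k] Module.Dual k H ⊗[k] H,
      (∀ f : Module.Dual k H,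
        (TensorProduct.rid k (Module.Dual k H))
          ((LinearMap.lTensor (Module.Dual k H) (Coalgebra.counit (R := k))) (ρ f)) = f) ∧
      (∀ f : Module.Dual k H,
        (TensorProduct.assoc k (Module.Dual k H) H H)
          ((LinearMap.rTensor H ρ) (ρ f)) =
        (LinearMap.lTensor (Module.Dual k H) (Coalgebra.comul (R := k))) (ρ f)) ∧
      (∀ g f : Module.Dual k H,
        (TensorProduct.rid k (Module.Dual k H))
          ((LinearMap.lTensor (Module.Dual k H) g) (ρ f)) = conv k H g f) ∧
      (∀ (f : Module.Dual k H) (h : H),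
        ρ (dualAct k H h f) =
          (TensorProduct.homTensorHomMap (RingHom.id k) (Module.Dual k H) H (Module.Dual k H) H)
            ((TensorProduct.map (dualAct k H) (LinearMap.mul k H).flip)
              (Coalgebra.comul (R := k) h)) (ρ f)) := by
  classical
  obtain ⟨n, F, G, -, -, hFG⟩ := Module.Finite.exists_comp_eq_id_of_projective k H
  set e : Fin n → H := fun i => F (Pi.single i 1) with he
  set ε : Fin n → Module.Dual k H := fun i => LinearMap.proj i ∘ₗ G with hε
  have hsingle : ∀ v : Fin n → k, ∑ i, v i • (Pi.single i 1 : Fin n → k) = v := by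
    intro v
    funext j
    simp only [Finset.sum_apply, Pi.smul_apply, Pi.single_apply, smul_eq_mul,
      mul_ite, mul_one, mul_zero]
    simp
  have hd : ∀ x : H, ∑ i, ε i x • e i = x := by
    intro x
    have h1 : F (G x) = x := by
      have := LinearMap.congr_fun hFG x
      simpa using this
    calc ∑ i, ε i x • e i = ∑ i, F (G x i • (Pi.single i 1 : Fin n → k)) := by
          refine Finset.sum_congr rfl fun i _ => ?_
          rw [map_smul]; rfl
      _ = F (∑ i, G x i • (Pi.single i 1 : Fin n → k)) := by rw [map_sum]
      _ = F (G x) := by rw [hsingle (G x)]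
      _ = x := h1
  refine ⟨rho e ε, ?_, ?_, ?_, ?_⟩
  · intro f
    exact (Emap_rho e ε hd Coalgebra.counit f).trans (conv_counit f)
  · intro f
    rw [← LinearEquiv.eq_symm_apply]
    refine Emap_ext (M := Module.Dual k H ⊗[k] H) e ε hd fun g => ?_
    refine Emap_ext (M := Module.Dual k H) e ε hd fun g' => ?_
    have hL : Emap g' (Emap g ((LinearMap.rTensor H (rho e ε)) (rho e ε f)))
        = conv k H g' (conv k H g f) := by
      rw [rho_apply e ε f, map_sum, map_sum, map_sum]
      calc ∑ i, Emap g' (Emap g (LinearMap.rTensor H (rho e ε) (conv k H (ε i) f ⊗ₜ[k] e i)))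
          = ∑ i, g (e i) • conv k H g' (conv k H (ε i) f) := by
            refine Finset.sum_congr rfl fun i _ => ?_
            rw [LinearMap.rTensor_tmul, Emap_tmul, map_smul, Emap_rho e ε hd]
        _ = ∑ i, g (e i) • (convLM g') (conv k H (ε i) f) := rfl
        _ = (convLM g') (∑ i, g (e i) • conv k H (ε i) f) := by
            rw [map_sum]; simp only [map_smul]
        _ = conv k H g' (conv k H g f) := by rw [conv_dual e ε hd g f]; rfl
    have hR : Emap g' (Emap g ((TensorProduct.assoc k (Module.Dual k H) H H).symm
          ((LinearMap.lTensor (Module.Dual k H) (Coalgebra.comul (R := k))) (rho e ε f))))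
        = conv k H (conv k H g' g) f := by
      rw [rho_apply e ε f]
      simp only [map_sum]
      calc ∑ i, Emap g' (Emap g ((TensorProduct.assoc k (Module.Dual k H) H H).symm
              (LinearMap.lTensor (Module.Dual k H) (Coalgebra.comul (R := k))
                (conv k H (ε i) f ⊗ₜ[k] e i))))
          = ∑ i, conv k H g' g (e i) • conv k H (ε i) f := by
            refine Finset.sum_congr rfl fun i _ => ?_
            rw [LinearMap.lTensor_tmul, P2A]
            rfl
        _ = conv k H (conv k H g' g) f := conv_dual e ε hd _ f
    rw [hL, hR, conv_eq_cmulAux, conv_eq_cmulAux, conv_eq_cmulAux, conv_eq_cmulAux,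
      cmulAux_assoc]
  · intro g f
    exact Emap_rho e ε hd g f
  · intro f h
    refine Emap_ext (M := Module.Dual k H) e ε hd fun g => ?_
    rw [Emap_rho e ε hd g (dualAct k H h f)]
    set r := Coalgebra.Repr.arbitrary k h with hr
    have hRHS : Emap g
        ((TensorProduct.homTensorHomMap (RingHom.id k) (Module.Dual k H) H (Module.Dual k H) H)
          ((TensorProduct.map (dualAct k H) (LinearMap.mul k H).flip)
            (Coalgebra.comul (R := k) h)) (rho e ε f))
        = ∑ i ∈ r.index, dualAct k H (r.left i)
            (conv k H (g ∘ₗ (LinearMap.mul k H).flip (r.right i)) f) := by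
      conv_lhs => rw [← r.eq]
      rw [map_sum, map_sum, LinearMap.sum_apply, map_sum]
      refine Finset.sum_congr rfl fun i _ => ?_
      rw [TensorProduct.map_tmul, TensorProduct.homTensorHomMap_apply, rho_apply e ε f,
        map_sum, map_sum]
      calc ∑ j, Emap g (TensorProduct.map (dualAct k H (r.left i))
              ((LinearMap.mul k H).flip (r.right i)) (conv k H (ε j) f ⊗ₜ[k] e j))
          = ∑ j, (g ∘ₗ (LinearMap.mul k H).flip (r.right i)) (e j) •
              dualAct k H (r.left i) (conv k H (ε j) f) := by
            refine Finset.sum_congr rfl fun j _ => ?_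
            rw [TensorProduct.map_tmul, Emap_tmul]
            rfl
        _ = dualAct k H (r.left i)
              (∑ j, (g ∘ₗ (LinearMap.mul k H).flip (r.right i)) (e j) • conv k H (ε j) f) := by
            rw [map_sum]; simp only [map_smul]
        _ = dualAct k H (r.left i)
              (conv k H (g ∘ₗ (LinearMap.mul k H).flip (r.right i)) f) := by
            rw [conv_dual e ε hd _ f]
    rw [hRHS]
    ext x
    have key : (∑ i ∈ r.index,
          Coalgebra.comul (R := k) (HopfAlgebra.antipode (R := k) (r.left i)) *
            ((r.right i) ⊗ₜ[k] (1 : H)))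
        = (1 : H) ⊗ₜ[k] HopfAlgebra.antipode (R := k) h := by
      have h1 := antipodeComul_cmul_jm (k := k) (H := H)
      have h2 := LinearMap.congr_fun h1 h
      rw [cmulAux_repr _ _ r] at h2
      simpa using h2
    calc conv k H g (dualAct k H h f) x
        = LinearMap.mul' k k (TensorProduct.map g (dualAct k H h f) (Coalgebra.comul x)) := rfl
      _ = LinearMap.mul' k k (TensorProduct.map g f
            (Coalgebra.comul x * ((1 : H) ⊗ₜ[k] HopfAlgebra.antipode (R := k) h))) := P4C g f h _
      _ = LinearMap.mul' k k (TensorProduct.map g f (Coalgebra.comul x *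
            (∑ i ∈ r.index,
              Coalgebra.comul (R := k) (HopfAlgebra.antipode (R := k) (r.left i)) *
                ((r.right i) ⊗ₜ[k] (1 : H))))) := by rw [key]
      _ = ∑ i ∈ r.index, LinearMap.mul' k k (TensorProduct.map g f
            (Coalgebra.comul x *
              (Coalgebra.comul (R := k) (HopfAlgebra.antipode (R := k) (r.left i)) *
                ((r.right i) ⊗ₜ[k] (1 : H))))) := by
          rw [Finset.mul_sum, map_sum, map_sum]
      _ = ∑ i ∈ r.index, LinearMap.mul' k k (TensorProduct.map g f
            (Coalgebra.comul (R := k) (x * HopfAlgebra.antipode (R := k) (r.left i)) *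
              ((r.right i) ⊗ₜ[k] (1 : H)))) := by
          simp only [Bialgebra.comul_mul, mul_assoc]
      _ = ∑ i ∈ r.index, LinearMap.mul' k k (TensorProduct.map
            (g ∘ₗ (LinearMap.mul k H).flip (r.right i)) f
            (Coalgebra.comul (R := k) (x * HopfAlgebra.antipode (R := k) (r.left i)))) := by
          refine Finset.sum_congr rfl fun i _ => (P4A g f _ _).symm
      _ = (∑ i ∈ r.index, dualAct k H (r.left i)
            (conv k H (g ∘ₗ (LinearMap.mul k H).flip (r.right i)) f)) x := by
          rw [LinearMap.sum_apply]
          exact Finset.sum_congr rfl fun i _ => rfl
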